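/- arXiv:2404.14892 — 4 statements merged into one kernel-verified Lean document; each statement's English description precedes it below -/
import Mathlib

section
/- Let $f:[a,b] \to \mathbb{R}$ be such that $f^{(n+1)}$ is continuous on $[a,b]$, with $a < b$, $\alpha > 0$, $\alpha \notin \{1,2,3,\dots\}$, $n = \lfloor \alpha \rfloor + 1$. Then $\frac{f^{(n)}(a) + f^{(n)}(b)}{2} - \frac{\Gamma(n-\alpha+1)}{2(b-a)^{n-\alpha}}\left[({}^C D_{a^+}^{\alpha} f)(b) + (-1)^n ({}^C D_{b^-}^{\alpha} f)(a)\right] = \frac{b-a}{2} \int_0^1 \left[(1-t)^{n-\alpha} - t^{n-\alpha}\right] f^{(n+1)}(t a + (1-t) b)\, dt$. -/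
open intervalIntegral MeasureTheory Set

noncomputable def caputoLeft (α : ℝ) (n : ℕ) (f : ℝ → ℝ) (a x : ℝ) : ℝ :=
  (1 / Real.Gamma ((n:ℝ) - α)) * ∫ t in a..x, (x - t) ^ ((n:ℝ) - α - 1) * iteratedDeriv n f t

noncomputable def caputoRight (α : ℝ) (n : ℕ) (f : ℝ → ℝ) (b x : ℝ) : ℝ :=
  ((-1:ℝ)^n / Real.Gamma ((n:ℝ) - α)) * ∫ t in x..b, (t - x) ^ ((n:ℝ) - α - 1) * iteratedDeriv n f t

theorem caputo_trapezoid_identity (f : ℝ → ℝ) (a b α : ℝ) (n : ℕ)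
    (hab : a < b) (hα : 0 < α) (hαnat : ∀ k : ℕ, 1 ≤ k → α ≠ (k:ℝ))
    (hn : n = ⌊α⌋₊ + 1) (hf : ContDiff ℝ (n+1) f) :
    (iteratedDeriv n f a + iteratedDeriv n f b) / 2
      - Real.Gamma ((n:ℝ) - α + 1) / (2 * (b - a) ^ ((n:ℝ) - α))
        * (caputoLeft α n f a b + (-1:ℝ)^n * caputoRight α n f b a)
    = (b - a) / 2 *
        ∫ t in (0:ℝ)..1,
          ((1 - t) ^ ((n:ℝ) - α) - t ^ ((n:ℝ) - α)) * iteratedDeriv (n+1) f (t*a + (1-t)*b) := by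
  set β : ℝ := (n:ℝ) - α with hβdef
  have hne : α ≠ (⌊α⌋₊ : ℝ) := by
    intro h
    rcases Nat.eq_zero_or_pos ⌊α⌋₊ with h0 | h1
    · rw [h0] at h; exact hα.ne' (by simpa using h)
    · exact hαnat _ h1 h
  have hβ0 : 0 < β := by
    have := Nat.lt_floor_add_one α
    have : α < (n : ℝ) := by rw [hn]; push_cast; linarith
    simp only [hβdef]; linarith
  have hβ1 : β < 1 := by
    have h1 : (⌊α⌋₊ : ℝ) ≤ α := Nat.floor_le hα.le
    have h2 : (⌊α⌋₊ : ℝ) < α := lt_of_le_of_ne h1 (Ne.symm hne)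
    have : (n : ℝ) = (⌊α⌋₊ : ℝ) + 1 := by rw [hn]; push_cast; ring
    simp only [hβdef, this]; linarith
  set g : ℝ → ℝ := iteratedDeriv n f with hg
  set g' : ℝ → ℝ := iteratedDeriv (n+1) f with hg'
  have hgderiv : ∀ x, HasDerivAt g (g' x) x := by
    intro x
    have hd : Differentiable ℝ g := hf.differentiable_iteratedDeriv n (by exact_mod_cast Nat.lt_succ_self n)
    have : g' = deriv g := by rw [hg', hg, iteratedDeriv_succ]
    rw [this]
    exact (hd x).hasDerivAt
  have hg'c : Continuous g' := hf.continuous_iteratedDeriv (n+1) le_rfl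
  have hgc : Continuous g := (hf.differentiable_iteratedDeriv n (by exact_mod_cast Nat.lt_succ_self n)).continuous
  have hba : (0:ℝ) < b - a := by linarith
  -- integrability of singular kernels
  have hint1 : IntervalIntegrable (fun t => (b - t) ^ (β - 1)) volume a b := by
    have h0 : IntervalIntegrable (fun x : ℝ => x ^ (β - 1)) volume (b - a) (b - b) :=
      intervalIntegral.intervalIntegrable_rpow' (by linarith)
    simpa using h0.comp_sub_left b
  have hint2 : IntervalIntegrable (fun t => (t - a) ^ (β - 1)) volume a b := by
    have h0 : IntervalIntegrable (fun x : ℝ => x ^ (β - 1)) volume (a - a) (b - a) :=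
      intervalIntegral.intervalIntegrable_rpow' (by linarith)
    simpa using h0.comp_sub_right a
  have hJ1int : IntervalIntegrable (fun t => (b - t) ^ (β - 1) * g t) volume a b :=
    hint1.mul_continuousOn hgc.continuousOn
  have hJ2int : IntervalIntegrable (fun t => (t - a) ^ (β - 1) * g t) volume a b :=
    hint2.mul_continuousOn hgc.continuousOn
  set J1 : ℝ := ∫ t in a..b, (b - t) ^ (β - 1) * g t with hJ1def
  set J2 : ℝ := ∫ t in a..b, (t - a) ^ (β - 1) * g t with hJ2def
  set I1 : ℝ := ∫ t in a..b, (b - t) ^ β * g' t with hI1def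
  set I2 : ℝ := ∫ t in a..b, (t - a) ^ β * g' t with hI2def
  have hI1int : IntervalIntegrable (fun t => (b - t) ^ β * g' t) volume a b :=
    (((continuous_const.sub continuous_id').rpow_const (fun x => Or.inr hβ0.le)).mul hg'c).intervalIntegrable a b
  have hI2int : IntervalIntegrable (fun t => (t - a) ^ β * g' t) volume a b :=
    (((continuous_id'.sub continuous_const).rpow_const (fun x => Or.inr hβ0.le)).mul hg'c).intervalIntegrable a b
  -- IBP (left kernel)
  have key1 : β * J1 = (b - a) ^ β * g a + I1 := by
    have hftc : (∫ t in a..b, (-β * ((b - t) ^ (β - 1) * g t) + (b - t) ^ β * g' t)) =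
        (b - b) ^ β * g b - (b - a) ^ β * g a := by
      refine intervalIntegral.integral_eq_sub_of_hasDeriv_right_of_le
        (f := fun t => (b - t) ^ β * g t) hab.le ?_ ?_ ?_
      · exact (((continuous_const.sub continuous_id').rpow_const
          (fun x => Or.inr hβ0.le)).mul hgc).continuousOn
      · intro x hx
        have hx1 : b - x ≠ 0 := by have := hx.2; intro h; linarith [sub_eq_zero.mp h]
        have h1 : HasDerivAt (fun t => (b - t) ^ β) (-β * (b - x) ^ (β - 1)) x := by
          have := (((hasDerivAt_id' x).const_sub b).rpow_const (p := β) (Or.inl hx1))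
          convert this using 1; ring
        have h2 := h1.mul (hgderiv x)
        have : HasDerivAt (fun t => (b - t) ^ β * g t)
            (-β * ((b - x) ^ (β - 1) * g x) + (b - x) ^ β * g' x) x := by
          exact h2.congr_deriv (by ring)
        exact this.hasDerivWithinAt
      · exact (hJ1int.const_mul (-β)).add hI1int
    rw [intervalIntegral.integral_add (hJ1int.const_mul (-β)) hI1int,
        intervalIntegral.integral_const_mul] at hftc
    rw [sub_self, Real.zero_rpow hβ0.ne'] at hftc
    simp only [← hJ1def, ← hI1def] at hftc
    linarith
  -- IBP (right kernel)
  have key2 : β * J2 = (b - a) ^ β * g b - I2 := by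
    have hftc : (∫ t in a..b, (β * ((t - a) ^ (β - 1) * g t) + (t - a) ^ β * g' t)) =
        (b - a) ^ β * g b - (a - a) ^ β * g a := by
      refine intervalIntegral.integral_eq_sub_of_hasDeriv_right_of_le
        (f := fun t => (t - a) ^ β * g t) hab.le ?_ ?_ ?_
      · exact (((continuous_id'.sub continuous_const).rpow_const
          (fun x => Or.inr hβ0.le)).mul hgc).continuousOn
      · intro x hx
        have hx1 : x - a ≠ 0 := by have := hx.1; intro h; linarith [sub_eq_zero.mp h]
        have h1 : HasDerivAt (fun t => (t - a) ^ β) (β * (x - a) ^ (β - 1)) x := by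
          have := (((hasDerivAt_id' x).sub_const a).rpow_const (p := β) (Or.inl hx1))
          convert this using 1; ring
        have h2 := h1.mul (hgderiv x)
        have : HasDerivAt (fun t => (t - a) ^ β * g t)
            (β * ((x - a) ^ (β - 1) * g x) + (x - a) ^ β * g' x) x := by
          exact h2.congr_deriv (by ring)
        exact this.hasDerivWithinAt
      · exact (hJ2int.const_mul β).add hI2int
    rw [intervalIntegral.integral_add (hJ2int.const_mul β) hI2int,
        intervalIntegral.integral_const_mul] at hftc
    rw [sub_self, Real.zero_rpow hβ0.ne'] at hftc
    simp only [← hJ2def, ← hI2def] at hftc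
    linarith
  -- change of variables in the RHS
  have hrhs : (∫ t in (0:ℝ)..1, ((1 - t) ^ β - t ^ β) * g' (t*a + (1-t)*b))
      = (I2 - I1) / ((b - a) * (b - a) ^ β) := by
    set F : ℝ → ℝ := fun x => (((x - a)/(b - a)) ^ β - ((b - x)/(b - a)) ^ β) * g' x with hF
    have hptw : ∀ t : ℝ, ((1 - t) ^ β - t ^ β) * g' (t*a + (1-t)*b) = F ((a - b) * t + b) := by
      intro t
      have e1 : ((a - b) * t + b - a)/(b - a) = 1 - t := by
        rw [div_eq_iff hba.ne']; ring
      have e2 : (b - ((a - b) * t + b))/(b - a) = t := by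
        rw [div_eq_iff hba.ne']; ring
      have e5 : t*a + (1-t)*b = (a - b) * t + b := by ring
      simp only [hF, e1, e2, e5]
    have hcv : (∫ t in (0:ℝ)..1, F ((a - b) * t + b)) = (a - b)⁻¹ • ∫ x in ((a-b)*0 + b)..((a-b)*1 + b), F x :=
      intervalIntegral.integral_comp_mul_add F (by linarith : a - b ≠ 0) b
    have e3 : (a - b) * 0 + b = b := by ring
    have e4 : (a - b) * 1 + b = a := by ring
    rw [e3, e4] at hcv
    have hFeq : EqOn F (fun x => ((b - a) ^ β)⁻¹ * ((x - a) ^ β * g' x - (b - x) ^ β * g' x)) (uIcc a b) := by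
      intro x hx
      rw [uIcc_of_le hab.le] at hx
      have h1 : (0:ℝ) ≤ x - a := by linarith [hx.1]
      have h2 : (0:ℝ) ≤ b - x := by linarith [hx.2]
      simp only [hF]
      rw [Real.div_rpow h1 hba.le, Real.div_rpow h2 hba.le]
      field_simp
    have hFint : (∫ x in a..b, F x) = ((b - a) ^ β)⁻¹ * (I2 - I1) := by
      rw [intervalIntegral.integral_congr hFeq, intervalIntegral.integral_const_mul,
          intervalIntegral.integral_sub hI2int hI1int]
    calc (∫ t in (0:ℝ)..1, ((1 - t) ^ β - t ^ β) * g' (t*a + (1-t)*b))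
        = ∫ t in (0:ℝ)..1, F ((a - b) * t + b) := by
          exact intervalIntegral.integral_congr (fun t _ => hptw t)
      _ = (a - b)⁻¹ • ∫ x in b..a, F x := hcv
      _ = (I2 - I1) / ((b - a) * (b - a) ^ β) := by
          rw [intervalIntegral.integral_symm, hFint, smul_eq_mul]
          have hA : ((b - a) ^ β) ≠ 0 := (Real.rpow_pos_of_pos hba β).ne'
          have hab' : a - b ≠ 0 := by intro h; rw [sub_eq_zero] at h; exact hab.ne h
          field_simp
          ring
  -- final algebra
  have hΓ : Real.Gamma (β + 1) = β * Real.Gamma β := Real.Gamma_add_one hβ0.ne'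
  have hΓpos : 0 < Real.Gamma β := Real.Gamma_pos_of_pos hβ0
  have hA : (0:ℝ) < (b - a) ^ β := Real.rpow_pos_of_pos hba β
  have hsq : ((-1:ℝ)^n) * ((-1:ℝ)^n) = 1 := by
    rw [← pow_add]; exact (neg_one_pow_eq_one_iff_even (by norm_num)).mpr (Even.add_self n)
  rw [caputoLeft, caputoRight]
  simp only [← hβdef, ← hg, ← hg', ← hJ1def, ← hJ2def, hΓ, hrhs]
  have e : (-1:ℝ)^n * ((-1:ℝ)^n / Real.Gamma β * J2) = 1 / Real.Gamma β * J2 := by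
    rw [← mul_assoc, ← mul_div_assoc, hsq]
  rw [e]
  have h5 : β * Real.Gamma β / (2 * (b-a)^β) *
      (1 / Real.Gamma β * J1 + 1 / Real.Gamma β * J2)
      = (β * J1 + β * J2) / (2 * (b-a)^β) := by
    rw [div_mul_eq_mul_div, div_eq_div_iff (by positivity) (by positivity)]
    field_simp
  rw [h5, key1, key2]
  have hA' : ((b - a) ^ β) ≠ 0 := hA.ne'
  field_simp
  ring
end

section
/- Let $f:[a,b] \to \mathbb{R}$ with $f^{(n+1)}$ continuous on $[a,b]$, and let $a \le x < y \le b$, $\alpha > 0$, $\alpha \notin \{1,2,\dots\}$, $n = \lfloor \alpha \rfloor + 1$. Then $\frac{1}{y-x} f^{(n)}(y) - \frac{(-1)^n \Gamma(n-\alpha+1)}{(y-x)^{n-\alpha+1}} ({}^C D_{y^-}^{\alpha} f)(x) = \int_0^1 (1-t)^{n-\alpha} f^{(n+1)}(t x + (1-t) y)\, dt$. -/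
theorem caputo_right_identity (f : ℝ → ℝ) (a b x y α : ℝ) (n : ℕ)
    (hax : a ≤ x) (hxy : x < y) (hyb : y ≤ b) (hα : 0 < α)
    (hαnat : ∀ k : ℕ, 1 ≤ k → α ≠ (k:ℝ)) (hn : n = ⌊α⌋₊ + 1)
    (hf : ContDiff ℝ (n+1) f) :
    (1 / (y - x)) * iteratedDeriv n f y
      - ((-1:ℝ)^n * Real.Gamma ((n:ℝ) - α + 1) / (y - x) ^ ((n:ℝ) - α + 1))
        * caputoRight α n f y x
    = ∫ t in (0:ℝ)..1, (1 - t) ^ ((n:ℝ) - α) * iteratedDeriv (n+1) f (t*x + (1-t)*y) := by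
  unfold caputoRight
  set μ : ℝ := (n:ℝ) - α with hμdef
  have hμ0 : 0 < μ := by
    have : α < ⌊α⌋₊ + 1 := Nat.lt_floor_add_one α
    simp only [hμdef, hn]
    push_cast
    linarith
  have hyx : 0 < y - x := sub_pos.mpr hxy
  set F : ℝ → ℝ := iteratedDeriv n f with hF
  set F' : ℝ → ℝ := iteratedDeriv (n+1) f with hF'
  have hFd : Differentiable ℝ F := hf.differentiable_iteratedDeriv n (by exact_mod_cast Nat.lt_succ_self n)
  have hFderiv : ∀ s, HasDerivAt F (F' s) s := by
    intro s
    have := (hFd s).hasDerivAt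
    rwa [hF', iteratedDeriv_succ]
  have hF'c : Continuous F' := hf.continuous_iteratedDeriv (n+1) (le_refl _)
  have hFc : Continuous F := hFd.continuous
  -- integrability of the singular kernel
  have hker : IntervalIntegrable (fun u => (u - x) ^ (μ - 1)) MeasureTheory.volume x y := by
    have h1 : IntervalIntegrable (fun v : ℝ => v ^ (μ - 1)) MeasureTheory.volume 0 (y - x) :=
      intervalIntegral.intervalIntegrable_rpow' (by linarith)
    have := h1.comp_sub_right x
    simpa using this
  have hker2 : IntervalIntegrable (fun u => (u - x) ^ (μ - 1) * F u) MeasureTheory.volume x y := by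
    have := (hker.continuousOn_mul (g := F) hFc.continuousOn)
    simpa [mul_comm] using this
  -- FTC / integration by parts
  have hFTC : (∫ u in x..y, (μ * (u - x) ^ (μ - 1) * F u + (u - x) ^ μ * F' u))
      = (y - x) ^ μ * F y := by
    have hcont : ContinuousOn (fun u => (u - x) ^ μ * F u) (Set.Icc x y) := by
      apply Continuous.continuousOn
      exact ((continuous_id.sub continuous_const).rpow_const (fun u => Or.inr hμ0.le)).mul hFc
    have hderiv : ∀ u ∈ Set.Ioo x y, HasDerivWithinAt (fun u => (u - x) ^ μ * F u)
        (μ * (u - x) ^ (μ - 1) * F u + (u - x) ^ μ * F' u) (Set.Ioi u) u := by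
      intro u hu
      have h1 : HasDerivAt (fun u => (u - x) ^ μ)
          (1 * μ * (u - x) ^ (μ - 1)) u :=
        ((hasDerivAt_id u).sub_const x).rpow_const (Or.inl (by simp; linarith [hu.1]))
      have := (h1.mul (hFderiv u)).hasDerivWithinAt (s := Set.Ioi u)
      exact this.congr_deriv (by ring)
    have hint : IntervalIntegrable
        (fun u => μ * (u - x) ^ (μ - 1) * F u + (u - x) ^ μ * F' u)
        MeasureTheory.volume x y := by
      apply IntervalIntegrable.add
      · have := hker2.const_mul μ
        simpa [mul_assoc] using this
      · apply Continuous.intervalIntegrable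
        exact ((continuous_id.sub continuous_const).rpow_const (fun u => Or.inr hμ0.le)).mul hF'c
    have := intervalIntegral.integral_eq_sub_of_hasDeriv_right_of_le hxy.le hcont hderiv hint
    rw [this, sub_self, Real.zero_rpow hμ0.ne']
    simp
  have hint1 : IntervalIntegrable
      (fun u => μ * ((u - x) ^ (μ - 1) * F u)) MeasureTheory.volume x y := hker2.const_mul μ
  have hint2 : IntervalIntegrable (fun u => (u - x) ^ μ * F' u) MeasureTheory.volume x y := by
    apply Continuous.intervalIntegrable
    exact ((continuous_id.sub continuous_const).rpow_const (fun u => Or.inr hμ0.le)).mul hF'c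
  have hparts : (∫ u in x..y, (u - x) ^ μ * F' u)
      = (y - x) ^ μ * F y - μ * ∫ u in x..y, (u - x) ^ (μ - 1) * F u := by
    have hsplit : (∫ u in x..y, (μ * (u - x) ^ (μ - 1) * F u + (u - x) ^ μ * F' u))
        = (∫ u in x..y, μ * ((u - x) ^ (μ - 1) * F u)) + ∫ u in x..y, (u - x) ^ μ * F' u := by
      rw [← intervalIntegral.integral_add hint1 hint2]
      congr 1; funext u; ring
    rw [hsplit, intervalIntegral.integral_const_mul] at hFTC
    linarith
  -- substitution on the RHS
  have hsub : (∫ t in (0:ℝ)..1, (1 - t) ^ μ * F' (t*x + (1-t)*y))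
      = (1 / (y - x)) * ∫ u in x..y, ((u - x) / (y - x)) ^ μ * F' u := by
    have hGc : Continuous (fun u => ((u - x) / (y - x)) ^ μ * F' u) :=
      (((continuous_id.sub continuous_const).div_const _).rpow_const
        (fun u => Or.inr hμ0.le)).mul hF'c
    have hφd : ∀ t ∈ Set.uIcc (0:ℝ) 1,
        HasDerivAt (fun t : ℝ => t * x + (1 - t) * y) (x - y) t := by
      intro t ht
      have : HasDerivAt (fun t : ℝ => t * x + (1 - t) * y) (1 * x + (0 - 1) * y) t :=
        ((hasDerivAt_id t).mul_const x).add
          (((hasDerivAt_const t (1:ℝ)).sub (hasDerivAt_id t)).mul_const y)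
      simpa [sub_eq_add_neg] using this
    have hcv := intervalIntegral.integral_comp_smul_deriv hφd continuousOn_const hGc
    simp only [Function.comp] at hcv
    have heq : ∀ t ∈ Set.uIcc (0:ℝ) 1, (x - y) •
        (((t * x + (1 - t) * y - x) / (y - x)) ^ μ * F' (t * x + (1 - t) * y))
        = (x - y) * ((1 - t) ^ μ * F' (t * x + (1 - t) * y)) := by
      intro t _
      have h1 : (t * x + (1 - t) * y - x) / (y - x) = 1 - t := by
        field_simp
        ring
      rw [h1, smul_eq_mul]
    rw [intervalIntegral.integral_congr heq, intervalIntegral.integral_const_mul] at hcv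
    norm_num at hcv
    rw [intervalIntegral.integral_symm x y] at hcv
    field_simp
    linear_combination -hcv
  have hdiv : (∫ u in x..y, ((u - x) / (y - x)) ^ μ * F' u)
      = (1 / (y - x) ^ μ) * ∫ u in x..y, (u - x) ^ μ * F' u := by
    rw [← intervalIntegral.integral_const_mul]
    apply intervalIntegral.integral_congr
    intro u hu
    rw [Set.uIcc_of_le hxy.le] at hu
    dsimp only
    rw [Real.div_rpow (by linarith [hu.1]) hyx.le]
    ring
  -- assemble
  have hΓ : Real.Gamma (μ + 1) = μ * Real.Gamma μ := Real.Gamma_add_one hμ0.ne'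
  have hΓpos : 0 < Real.Gamma μ := Real.Gamma_pos_of_pos hμ0
  have hpow : (y - x) ^ (μ + 1) = (y - x) ^ μ * (y - x) := by
    rw [Real.rpow_add hyx, Real.rpow_one]
  have hpowpos : 0 < (y - x) ^ μ := Real.rpow_pos_of_pos hyx μ
  rw [hsub, hdiv, hparts, hΓ, hpow]
  rcases Nat.even_or_odd n with hpar | hpar
  · rw [hpar.neg_one_pow]
    field_simp
  · rw [hpar.neg_one_pow]
    field_simp
end

section
/- Let $0 \le a < b$, $\alpha \in (0,1)$, $n = \lfloor \alpha \rfloor + 1 = 1$, $m \in (0,1]$, and let $f$ be such that $f^{(n+1)}$ is continuous on an interval containing $[a, b/m]$ and $|f^{(n+1)}|$ is $m$-convex on $[0, b/m]$. Then $\left|\frac{f^{(n)}(a) + f^{(n)}(b)}{2} - \frac{\Gamma(n-\alpha+1)}{2(b-a)^{n-\alpha}}\left[({}^C D_{a^+}^{\alpha} f)(b) + (-1)^n ({}^C D_{b^-}^{\alpha} f)(a)\right]\right| \le \frac{b-a}{2}\left(\frac{1}{2(n-\alpha+1)} + \frac{1}{2(n-\alpha+2)}\right)\left(|f^{(n+1)}(a)|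 + m |f^{(n+1)}(b/m)|\right)$. -/
open intervalIntegral MeasureTheory Set

lemma rpow_subadd {x y p : ℝ} (hx : 0 ≤ x) (hy : 0 ≤ y) (hp : 0 ≤ p) (hp1 : p ≤ 1) :
    (x + y) ^ p ≤ x ^ p + y ^ p := by
  have h := NNReal.coe_le_coe.2 (NNReal.rpow_add_le_add_rpow x.toNNReal y.toNNReal hp hp1)
  push_cast at h
  rwa [Real.coe_toNNReal x hx, Real.coe_toNNReal y hy] at h

lemma abs_rpow_diff {x y p : ℝ} (hx : 0 ≤ x) (hy : 0 ≤ y) (hp0 : 0 ≤ p) (hp1 : p ≤ 1) :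
    |x ^ p - y ^ p| ≤ |x - y| ^ p := by
  wlog hxy : y ≤ x generalizing x y
  · rw [abs_sub_comm, abs_sub_comm x y]; exact this hy hx (le_of_not_ge hxy)
  rw [abs_of_nonneg (sub_nonneg.2 (Real.rpow_le_rpow hy hxy hp0)),
    abs_of_nonneg (sub_nonneg.2 hxy)]
  have hkey : x ^ p ≤ y ^ p + (x - y) ^ p := by
    calc x ^ p = (y + (x - y)) ^ p := by ring_nf
    _ ≤ _ := rpow_subadd hy (by linarith) hp0 hp1
  linarith

lemma reflect_integral (g : ℝ → ℝ) (a b : ℝ) :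
    ∫ t in a..b, g (a + b - t) = ∫ t in a..b, g t := by
  simpa using integral_comp_sub_left (a := a) (b := b) g (a + b)

lemma intInt_rpow_sub {r : ℝ} (hr : -1 < r) (a b c : ℝ) :
    IntervalIntegrable (fun t => (t - c) ^ r) volume a b := by
  simpa using (intervalIntegrable_rpow' (a := a - c) (b := b - c) hr).comp_sub_right c

lemma intInt_rpow_sub' {r : ℝ} (hr : -1 < r) (a b c : ℝ) :
    IntervalIntegrable (fun t => (c - t) ^ r) volume a b := by
  simpa using (intervalIntegrable_rpow' (a := c - a) (b := c - b) hr).comp_sub_left c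

lemma parts_left {ρ a b : ℝ} (hρ : 0 < ρ) (hab : a < b)
    (g g' : ℝ → ℝ) (hg : ∀ t, HasDerivAt g (g' t) t) (hg' : Continuous g') :
    ∫ t in a..b, (t - a) ^ ρ * g' t
      = (b - a) ^ ρ * g b - ρ * ∫ t in a..b, (t - a) ^ (ρ - 1) * g t := by
  have hgc : Continuous g := continuous_iff_continuousAt.2 fun t => (hg t).continuousAt
  have hcontp : Continuous (fun t : ℝ => (t - a) ^ ρ) :=
    (Real.continuous_rpow_const hρ.le).comp (continuous_id.sub continuous_const)
  have hGc : ContinuousOn (fun t => (t - a) ^ ρ * g t) (Icc a b) :=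
    (hcontp.mul hgc).continuousOn
  have hGd : ∀ x ∈ Ioo a b, HasDerivAt (fun t => (t - a) ^ ρ * g t)
      (ρ * (x - a) ^ (ρ - 1) * g x + (x - a) ^ ρ * g' x) x := by
    intro x hx
    have hx0 : x - a ≠ 0 := sub_ne_zero.2 (ne_of_gt hx.1)
    have h1 : HasDerivAt (fun t : ℝ => (t - a) ^ ρ) (ρ * (x - a) ^ (ρ - 1)) x := by
      have := (Real.hasDerivAt_rpow_const (x := x - a) (p := ρ) (Or.inl hx0)).comp x
        ((hasDerivAt_id x).sub_const a)
      simpa [Function.comp_def] using this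
    exact h1.mul (hg x)
  have hi1 : IntervalIntegrable (fun t => ρ * (t - a) ^ (ρ - 1) * g t) volume a b := by
    have := ((intInt_rpow_sub (r := ρ - 1) (by linarith) a b a).const_mul ρ).mul_continuousOn
      hgc.continuousOn
    simpa [mul_assoc] using this
  have hi2 : IntervalIntegrable (fun t => (t - a) ^ ρ * g' t) volume a b :=
    (hcontp.mul hg').intervalIntegrable a b
  have key := integral_eq_sub_of_hasDerivAt_of_le hab.le hGc hGd (hi1.add hi2)
  rw [integral_add hi1 hi2] at key
  have h0 : (a - a) ^ ρ = 0 := by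
    rw [sub_self]; exact Real.zero_rpow (ne_of_gt hρ)
  rw [h0] at key
  have hc : ∫ t in a..b, ρ * (t - a) ^ (ρ - 1) * g t
      = ρ * ∫ t in a..b, (t - a) ^ (ρ - 1) * g t := by
    simp only [mul_assoc]
    exact integral_const_mul ρ _
  rw [hc] at key
  linarith

lemma parts_right {ρ a b : ℝ} (hρ : 0 < ρ) (hab : a < b)
    (g g' : ℝ → ℝ) (hg : ∀ t, HasDerivAt g (g' t) t) (hg' : Continuous g') :
    ∫ t in a..b, (b - t) ^ ρ * g' t
      = -((b - a) ^ ρ * g a) + ρ * ∫ t in a..b, (b - t) ^ (ρ - 1) * g t := by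
  have hgc : Continuous g := continuous_iff_continuousAt.2 fun t => (hg t).continuousAt
  have hcontp : Continuous (fun t : ℝ => (b - t) ^ ρ) :=
    (Real.continuous_rpow_const hρ.le).comp (continuous_const.sub continuous_id)
  have hGc : ContinuousOn (fun t => (b - t) ^ ρ * g t) (Icc a b) :=
    (hcontp.mul hgc).continuousOn
  have hGd : ∀ x ∈ Ioo a b, HasDerivAt (fun t => (b - t) ^ ρ * g t)
      (-(ρ * (b - x) ^ (ρ - 1)) * g x + (b - x) ^ ρ * g' x) x := by
    intro x hx
    have hx0 : b - x ≠ 0 := sub_ne_zero.2 (ne_of_gt hx.2)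
    have h1 : HasDerivAt (fun t : ℝ => (b - t) ^ ρ) (-(ρ * (b - x) ^ (ρ - 1))) x := by
      have := (Real.hasDerivAt_rpow_const (x := b - x) (p := ρ) (Or.inl hx0)).comp x
        ((hasDerivAt_id x).const_sub b)
      simpa [Function.comp_def, mul_comm, mul_assoc] using this
    exact h1.mul (hg x)
  have hi1 : IntervalIntegrable (fun t => -(ρ * (b - t) ^ (ρ - 1)) * g t) volume a b := by
    have := ((intInt_rpow_sub' (r := ρ - 1) (by linarith) a b b).const_mul (-ρ)).mul_continuousOn
      hgc.continuousOn
    simpa [mul_assoc, neg_mul] using this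
  have hi2 : IntervalIntegrable (fun t => (b - t) ^ ρ * g' t) volume a b :=
    (hcontp.mul hg').intervalIntegrable a b
  have key := integral_eq_sub_of_hasDerivAt_of_le hab.le hGc hGd (hi1.add hi2)
  rw [integral_add hi1 hi2] at key
  have h0 : (b - b) ^ ρ = 0 := by
    rw [sub_self]; exact Real.zero_rpow (ne_of_gt hρ)
  rw [h0] at key
  have hc : ∫ t in a..b, -(ρ * (b - t) ^ (ρ - 1)) * g t
      = -ρ * ∫ t in a..b, (b - t) ^ (ρ - 1) * g t := by
    simp only [neg_mul, mul_assoc]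
    rw [intervalIntegral.integral_neg, intervalIntegral.integral_const_mul ρ _]
  rw [hc] at key
  linarith

lemma int_linear_rpow {p k u v : ℝ} (hp : 0 < p) (hk : 0 < k) :
    ∫ t in u..v, (k * (t - u)) ^ p = (k * (v - u)) ^ (p + 1) / (k * (p + 1)) := by
  have hcont : Continuous (fun t : ℝ => (k * (t - u)) ^ p) :=
    (Real.continuous_rpow_const hp.le).comp
      (continuous_const.mul (continuous_id.sub continuous_const))
  have hd : ∀ x ∈ uIcc u v, HasDerivAt (fun t => (k * (t - u)) ^ (p + 1) / (k * (p + 1)))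
      ((k * (x - u)) ^ p) x := by
    intro x _
    have hin : HasDerivAt (fun t : ℝ => k * (t - u)) k x := by
      simpa using ((hasDerivAt_id x).sub_const u).const_mul k
    have h1 : HasDerivAt (fun t : ℝ => (k * (t - u)) ^ (p + 1))
        ((p + 1) * (k * (x - u)) ^ p * k) x := by
      have := (Real.hasDerivAt_rpow_const (x := k * (x - u)) (p := p + 1)
        (Or.inr (by linarith))).comp x hin
      simpa [Function.comp_def] using this
    have := h1.div_const (k * (p + 1))
    refine this.congr_deriv ?_
    field_simp [hk.ne', (show (0:ℝ) < p + 1 by linarith).ne']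
  have key := integral_eq_sub_of_hasDerivAt hd (hcont.intervalIntegrable u v)
  rw [key]
  have h0 : (k * (u - u)) ^ (p + 1) = 0 := by
    rw [sub_self, mul_zero]; exact Real.zero_rpow (by linarith)
  rw [h0]
  ring

lemma int_linear_rpow' {p k u v : ℝ} (hp : 0 < p) (hk : 0 < k) :
    ∫ t in u..v, (k * (v - t)) ^ p = (k * (v - u)) ^ (p + 1) / (k * (p + 1)) := by
  rw [← int_linear_rpow hp hk, ← reflect_integral (fun t => (k * (t - u)) ^ p) u v]
  apply integral_congr
  intro t _
  simp only
  congr 2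
  ring

set_option maxHeartbeats 2000000 in
theorem caputo_trapezoid_mconvex (f : ℝ → ℝ) (a b α m : ℝ)
    (ha : 0 ≤ a) (hab : a < b) (hα : α ∈ Set.Ioo (0:ℝ) 1) (hm : m ∈ Set.Ioc (0:ℝ) 1)
    (hf : ContDiff ℝ 2 f)
    (hconv : ∀ u ∈ Set.Icc (0:ℝ) (b/m), ∀ v ∈ Set.Icc (0:ℝ) (b/m), ∀ t ∈ Set.Icc (0:ℝ) 1,
      |iteratedDeriv 2 f (t*u + m*(1-t)*v)|
        ≤ t * |iteratedDeriv 2 f u| + m * (1-t) * |iteratedDeriv 2 f v|) :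
    |(deriv f a + deriv f b) / 2
        - Real.Gamma (1 - α + 1) / (2 * (b - a) ^ (1 - α))
          * (caputoLeft α 1 f a b + (-1:ℝ)^1 * caputoRight α 1 f b a)|
      ≤ (b - a) / 2 * (1 / (2*(1 - α + 1)) + 1 / (2*(1 - α + 2)))
          * (|iteratedDeriv 2 f a| + m * |iteratedDeriv 2 f (b/m)|) := by
  obtain ⟨hα0, hα1⟩ := hα
  obtain ⟨hm0, hm1⟩ := hm
  have hb0 : 0 < b := lt_of_le_of_lt ha hab
  have hba : 0 < b - a := sub_pos.2 hab
  have hρ0 : (0:ℝ) < 1 - α := by linarith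
  have hρ1 : 1 - α ≤ 1 := by linarith
  -- derivative facts
  have hf2 : ContDiff ℝ (1 + 1) f := by norm_num; exact_mod_cast hf
  have hd1 : ContDiff ℝ 1 (deriv f) := (contDiff_succ_iff_deriv.mp hf2).2.2
  have hdd : iteratedDeriv 2 f = deriv (deriv f) := by
    simp [iteratedDeriv_succ, iteratedDeriv_one]
  have hg : ∀ t, HasDerivAt (deriv f) (iteratedDeriv 2 f t) t := by
    intro t; rw [hdd]; exact ((hd1.differentiable one_ne_zero) t).hasDerivAt
  have hg'c : Continuous (iteratedDeriv 2 f) := by rw [hdd]; exact hd1.continuous_deriv le_rfl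
  have hgc : Continuous (deriv f) := hd1.continuous
  have hΓpos : 0 < Real.Gamma (1 - α) := Real.Gamma_pos_of_pos hρ0
  have hbapow : 0 < (b - a) ^ (1 - α) := Real.rpow_pos_of_pos hba _
  -- continuity helpers
  have hcontpa : Continuous (fun t : ℝ => (t - a) ^ (1 - α)) :=
    (Real.continuous_rpow_const hρ0.le).comp (continuous_id.sub continuous_const)
  have hcontpb : Continuous (fun t : ℝ => (b - t) ^ (1 - α)) :=
    (Real.continuous_rpow_const hρ0.le).comp (continuous_const.sub continuous_id)
  have hwcont : Continuous (fun t : ℝ => |2*t - a - b| ^ (1 - α)) :=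
    (Real.continuous_rpow_const hρ0.le).comp
      (((continuous_const.mul continuous_id).sub continuous_const).sub continuous_const).abs
  -- the key identity
  have hPL := parts_left hρ0 hab (deriv f) (iteratedDeriv 2 f) hg hg'c
  have hPR := parts_right hρ0 hab (deriv f) (iteratedDeriv 2 f) hg hg'c
  have hLsplit : (∫ t in a..b, ((t - a) ^ (1-α) - (b - t) ^ (1-α)) * iteratedDeriv 2 f t)
      = (∫ t in a..b, (t - a) ^ (1-α) * iteratedDeriv 2 f t)
        - ∫ t in a..b, (b - t) ^ (1-α) * iteratedDeriv 2 f t := by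
    rw [← integral_sub (f := fun t => (t - a) ^ (1-α) * iteratedDeriv 2 f t) (g := fun t => (b - t) ^ (1-α) * iteratedDeriv 2 f t) ((hcontpa.mul hg'c).intervalIntegrable a b)
      ((hcontpb.mul hg'c).intervalIntegrable a b)]
    apply integral_congr; intro t _; simp only; ring
  have hL : (∫ t in a..b, ((t - a) ^ (1-α) - (b - t) ^ (1-α)) * iteratedDeriv 2 f t)
      = (b-a)^(1-α) * (deriv f b + deriv f a)
        - (1-α) * ((∫ t in a..b, (b - t) ^ (1-α-1) * deriv f t)
          + ∫ t in a..b, (t - a) ^ (1-α-1) * deriv f t) := by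
    rw [hLsplit, hPL, hPR]; ring
  have hE : (deriv f a + deriv f b) / 2
        - Real.Gamma (1 - α + 1) / (2 * (b - a) ^ (1 - α))
          * (caputoLeft α 1 f a b + (-1:ℝ)^1 * caputoRight α 1 f b a)
      = (∫ t in a..b, ((t - a) ^ (1-α) - (b - t) ^ (1-α)) * iteratedDeriv 2 f t)
          / (2 * (b-a)^(1-α)) := by
    rw [hL]
    simp only [caputoLeft, caputoRight, Nat.cast_one, iteratedDeriv_one, pow_one]
    rw [Real.Gamma_add_one (ne_of_gt hρ0)]
    field_simp
    ring
  rw [hE]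
  -- pointwise bound
  set A := |iteratedDeriv 2 f a| with hA
  set B := |iteratedDeriv 2 f (b/m)| with hB
  have hA0 : 0 ≤ A := abs_nonneg _
  have hB0 : 0 ≤ B := abs_nonneg _
  set h : ℝ → ℝ := fun t => |2*t - a - b| ^ (1 - α) * (((b - t) * A + (t - a) * (m*B)) / (b - a))
    with hh
  have hcont_h : Continuous h := by
    apply hwcont.mul
    apply Continuous.div_const
    exact ((continuous_const.sub continuous_id).mul continuous_const).add
      ((continuous_id.sub continuous_const).mul continuous_const)
  have hpt : ∀ t ∈ Icc a b,
      |((t - a) ^ (1-α) - (b - t) ^ (1-α)) * iteratedDeriv 2 f t| ≤ h t := by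
    intro t ht
    obtain ⟨hta, htb⟩ := ht
    have h1 : |(t - a) ^ (1-α) - (b - t) ^ (1-α)| ≤ |2*t - a - b| ^ (1-α) := by
      have hd := abs_rpow_diff (sub_nonneg.2 hta) (sub_nonneg.2 htb) hρ0.le hρ1
      have heq : (t - a) - (b - t) = 2*t - a - b := by ring
      rwa [heq] at hd
    have h2 : |iteratedDeriv 2 f t| ≤ ((b - t) * A + (t - a) * (m*B)) / (b - a) := by
      have hbm : b ≤ b / m := by
        rw [le_div_iff₀ hm0]; nlinarith
      have hua : a ∈ Icc (0:ℝ) (b/m) := ⟨ha, by linarith⟩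
      have huv : b/m ∈ Icc (0:ℝ) (b/m) := ⟨by positivity, le_rfl⟩
      have hs : (b - t)/(b - a) ∈ Icc (0:ℝ) 1 :=
        ⟨div_nonneg (by linarith) hba.le, by rw [div_le_one hba]; linarith⟩
      have hcv := hconv a hua (b/m) huv ((b - t)/(b - a)) hs
      have harg : (b - t)/(b - a) * a + m * (1 - (b - t)/(b - a)) * (b/m) = t := by
        field_simp
        ring
      rw [harg] at hcv
      calc |iteratedDeriv 2 f t|
          ≤ (b - t)/(b - a) * A + m * (1 - (b - t)/(b - a)) * B := hcv
        _ = ((b - t) * A + (t - a) * (m*B)) / (b - a) := by field_simp; ring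
    calc |((t - a) ^ (1-α) - (b - t) ^ (1-α)) * iteratedDeriv 2 f t|
        = |(t - a) ^ (1-α) - (b - t) ^ (1-α)| * |iteratedDeriv 2 f t| := abs_mul _ _
      _ ≤ |2*t - a - b| ^ (1-α) * (((b - t) * A + (t - a) * (m*B)) / (b - a)) := by
          apply mul_le_mul h1 h2 (abs_nonneg _) (Real.rpow_nonneg (abs_nonneg _) _)
      _ = h t := rfl
  have hLbound : |∫ t in a..b, ((t - a) ^ (1-α) - (b - t) ^ (1-α)) * iteratedDeriv 2 f t|
      ≤ |∫ t in a..b, h t| := by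
    have := intervalIntegral.norm_integral_le_abs_of_norm_le (μ := volume) (a := a) (b := b)
      (f := fun t => ((t - a) ^ (1-α) - (b - t) ^ (1-α)) * iteratedDeriv 2 f t) (g := h)
      ?_ (hcont_h.intervalIntegrable a b)
    · simpa [Real.norm_eq_abs] using this
    · filter_upwards [ae_restrict_mem measurableSet_uIoc] with t ht
      have htm : t ∈ Icc a b := by
        rw [uIoc_of_le hab.le] at ht
        exact ⟨le_of_lt ht.1, ht.2⟩
      simpa only [Real.norm_eq_abs] using hpt t htm
  -- compute ∫ h
  have hcb : (a+b)/2 ≤ b := by linarith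
  have hac : a ≤ (a+b)/2 := by linarith
  have hS2 : ∫ t in ((a+b)/2)..b, |2*t - a - b| ^ (1-α)
      = (b - a)^(1-α+1) / (2*(1-α+1)) := by
    have hlin := int_linear_rpow (p := 1-α) (k := 2) (u := (a+b)/2) (v := b) hρ0 two_pos
    have hcg : ∫ t in ((a+b)/2)..b, |2*t - a - b| ^ (1-α)
        = ∫ t in ((a+b)/2)..b, (2*(t - (a+b)/2)) ^ (1-α) := by
      apply integral_congr
      intro t ht
      rw [uIcc_of_le hcb] at ht
      have h0 : 0 ≤ 2*t - a - b := by have := ht.1; linarith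
      simp only
      rw [show (2*(t - (a+b)/2)) = 2*t - a - b by ring, abs_of_nonneg h0]
    rw [hcg, hlin, show (2*(b - (a+b)/2)) = b - a by ring]
  have hS1 : ∫ t in a..((a+b)/2), |2*t - a - b| ^ (1-α)
      = (b - a)^(1-α+1) / (2*(1-α+1)) := by
    have hlin := int_linear_rpow' (p := 1-α) (k := 2) (u := a) (v := (a+b)/2) hρ0 two_pos
    have hcg : ∫ t in a..((a+b)/2), |2*t - a - b| ^ (1-α)
        = ∫ t in a..((a+b)/2), (2*((a+b)/2 - t)) ^ (1-α) := by
      apply integral_congr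
      intro t ht
      rw [uIcc_of_le hac] at ht
      have h0 : 2*t - a - b ≤ 0 := by have := ht.2; linarith
      simp only
      rw [show (2*((a+b)/2 - t)) = -(2*t - a - b) by ring, abs_of_nonpos h0]
    rw [hcg, hlin, show (2*((a+b)/2 - a)) = b - a by ring]
  have hS : ∫ t in a..b, |2*t - a - b| ^ (1-α) = (b - a)^(1-α+1) / (1-α+1) := by
    rw [← integral_add_adjacent_intervals (hwcont.intervalIntegrable a ((a+b)/2))
      (hwcont.intervalIntegrable ((a+b)/2) b), hS1, hS2]
    have hne : (1:ℝ) - α + 1 ≠ 0 := by positivity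
    field_simp
    ring
  have hJint1 : IntervalIntegrable (fun t => |2*t - a - b| ^ (1-α) * (b - t)) volume a b :=
    (hwcont.mul (continuous_const.sub continuous_id)).intervalIntegrable a b
  have hJint2 : IntervalIntegrable (fun t => |2*t - a - b| ^ (1-α) * (t - a)) volume a b :=
    (hwcont.mul (continuous_id.sub continuous_const)).intervalIntegrable a b
  have hJ2eq : (∫ t in a..b, |2*t - a - b| ^ (1-α) * (t - a))
      = ∫ t in a..b, |2*t - a - b| ^ (1-α) * (b - t) := by
    have hrefl := reflect_integral (fun t => |2*t - a - b| ^ (1-α) * (b - t)) a b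
    rw [← hrefl]
    apply integral_congr
    intro t _
    simp only
    rw [show 2*(a + b - t) - a - b = -(2*t - a - b) by ring, abs_neg]
    ring_nf
  have hJsum : (∫ t in a..b, |2*t - a - b| ^ (1-α) * (b - t))
      + (∫ t in a..b, |2*t - a - b| ^ (1-α) * (t - a))
      = (b - a) * ((b - a)^(1-α+1) / (1-α+1)) := by
    rw [← integral_add hJint1 hJint2, ← hS, ← intervalIntegral.integral_const_mul]
    apply integral_congr
    intro t _
    simp only
    ring
  have hJ1 : (∫ t in a..b, |2*t - a - b| ^ (1-α) * (b - t))
      = (b - a) * ((b - a)^(1-α+1) / (1-α+1)) / 2 := by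
    rw [hJ2eq] at hJsum
    linarith
  have hIh : ∫ t in a..b, h t
      = (A + m*B) * ((b - a)^(1-α+1) / (2*(1-α+1))) := by
    have hsplit : ∫ t in a..b, h t
        = (A/(b-a)) * (∫ t in a..b, |2*t - a - b| ^ (1-α) * (b - t))
          + ((m*B)/(b-a)) * (∫ t in a..b, |2*t - a - b| ^ (1-α) * (t - a)) := by
      rw [← intervalIntegral.integral_const_mul, ← intervalIntegral.integral_const_mul,
        ← integral_add ((hJint1.const_mul _)) ((hJint2.const_mul _))]
      apply integral_congr
      intro t _
      simp only [hh]
      field_simp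
    rw [hsplit, hJ2eq, hJ1]
    field_simp
  -- final estimate
  have hIhval : |∫ t in a..b, h t| = (A + m*B) * ((b - a)^(1-α+1) / (2*(1-α+1))) := by
    rw [hIh, abs_of_nonneg]
    have : 0 < (b - a)^(1-α+1) := Real.rpow_pos_of_pos hba _
    positivity
  have hfin : |∫ t in a..b, ((t - a) ^ (1-α) - (b - t) ^ (1-α)) * iteratedDeriv 2 f t|
      ≤ (A + m*B) * ((b - a)^(1-α+1) / (2*(1-α+1))) := hIhval ▸ hLbound
  rw [abs_div, abs_of_pos (by positivity : (0:ℝ) < 2 * (b-a)^(1-α))]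
  calc |∫ t in a..b, ((t - a) ^ (1-α) - (b - t) ^ (1-α)) * iteratedDeriv 2 f t|
        / (2 * (b-a)^(1-α))
      ≤ ((A + m*B) * ((b - a)^(1-α+1) / (2*(1-α+1)))) / (2 * (b-a)^(1-α)) := by
        exact (div_le_div_iff_of_pos_right (by positivity)).2 hfin
    _ = (b - a) / 2 * (1 / (2*(1 - α + 1))) * (A + m*B) := by
        rw [Real.rpow_add_one (ne_of_gt hba)]
        field_simp
    _ ≤ (b - a) / 2 * (1 / (2*(1 - α + 1)) + 1 / (2*(1 - α + 2))) * (A + m * B) := by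
        have hpos : 0 ≤ (b - a) / 2 * (1 / (2*(1 - α + 2))) * (A + m*B) := by positivity
        nlinarith
end

section
/- Let $a < b$, $q > 1$, $p = q/(q-1)$, $\alpha \in (0,1)$, $n = \lfloor \alpha \rfloor + 1 = 1$, $m \in (0,1]$, $0 \le a$, and let $f$ have continuous $(n+1)$-st derivative with $|f^{(n+1)}|^q$ $m$-convex on $[0, b/m]$. Then $\left|\frac{f^{(n)}(a)+f^{(n)}(b)}{2} - \frac{\Gamma(n-\alpha+1)}{2(b-a)^{n-\alpha}}\left[({}^C D_{a^+}^{\alpha} f)(b) + (-1)^n ({}^C D_{b^-}^{\alpha} f)(a)\right]\right| \le \frac{b-a}{2^{1+1/q}} \left(\frac{1}{p(n-\alpha)+1}\right)^{1/p}\left(|f^{(n+1)}(a)|^q + m|f^{(n+1)}(b/m)|^q\right)^{1/q}$. -/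
open MeasureTheory intervalIntegral Set
open scoped NNReal

lemma rpow_sub_le_sub_rpow {u v r : ℝ} (hv : 0 ≤ v) (hvu : v ≤ u) (hr0 : 0 ≤ r) (hr1 : r ≤ 1) :
    u ^ r - v ^ r ≤ (u - v) ^ r := by
  have h := NNReal.rpow_add_le_add_rpow (⟨u - v, by linarith⟩ : ℝ≥0) (⟨v, hv⟩ : ℝ≥0) hr0 hr1
  have h' := (NNReal.coe_le_coe).2 h
  change (u - v + v) ^ r ≤ (u - v) ^ r + v ^ r at h'
  have huv : u - v + v = u := by ring
  rw [huv] at h'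
  linarith
lemma alg (ga gb X Y J c G r' : ℝ) (hc : c ≠ 0) (hG : G ≠ 0)
    (hs : r' * Y + r' * X + J = c * (ga + gb)) :
    (ga + gb) / 2 - (r' * G) / (2 * c) * ((1/G) * X + (-1:ℝ)^1 * ((-1/G) * Y)) = J / (2 * c) := by
  field_simp
  linear_combination (-1) * hs

lemma rpow_sub_le_sub_rpow' {u v r : ℝ} (hv : 0 ≤ v) (hvu : v ≤ u) (hr0 : 0 ≤ r) (hr1 : r ≤ 1) :
    u ^ r - v ^ r ≤ (u - v) ^ r := by
  have h := NNReal.rpow_add_le_add_rpow (⟨u - v, by linarith⟩ : ℝ≥0) (⟨v, hv⟩ : ℝ≥0) hr0 hr1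
  have h' := (NNReal.coe_le_coe).2 h
  change (u - v + v) ^ r ≤ (u - v) ^ r + v ^ r at h'
  have huv : u - v + v = u := by ring
  rw [huv] at h'
  linarith

lemma abs_rpow_sub_le {u v r : ℝ} (hu : 0 ≤ u) (hv : 0 ≤ v) (hr0 : 0 ≤ r) (hr1 : r ≤ 1) :
    |u ^ r - v ^ r| ≤ |u - v| ^ r := by
  rcases le_total v u with h | h
  · rw [abs_of_nonneg (sub_nonneg.2 (Real.rpow_le_rpow hv h hr0)),
      abs_of_nonneg (sub_nonneg.2 h)]
    exact rpow_sub_le_sub_rpow' hv h hr0 hr1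
  · rw [abs_of_nonpos (sub_nonpos.2 (Real.rpow_le_rpow hu h hr0)),
      abs_of_nonpos (sub_nonpos.2 h), neg_sub, neg_sub u v]
    exact rpow_sub_le_sub_rpow' hu h hr0 hr1

lemma integral_abs_two_mul_sub {a b β : ℝ} (hab : a < b) (hβ : 0 < β) :
    ∫ x in a..b, |2*x - (a+b)| ^ β = (b-a)^(β+1)/(β+1) := by
  have key := intervalIntegral.integral_comp_mul_add (a := a) (b := b)
    (f := fun y => |y| ^ β) (c := 2) two_ne_zero (-(a+b))
  simp only [← sub_eq_add_neg] at key
  rw [key, show 2*a - (a+b) = -(b-a) from by ring, show 2*b - (a+b) = b-a from by ring]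
  have hint : ∀ c d : ℝ, IntervalIntegrable (fun y => |y| ^ β) volume c d := fun c d =>
    (continuous_abs.rpow_const (fun x => Or.inr hβ.le)).intervalIntegrable c d
  have hsplitI : ∫ y in (-(b-a))..(b-a), |y|^β
      = (∫ y in (-(b-a))..(0:ℝ), |y|^β) + ∫ y in (0:ℝ)..(b-a), |y|^β :=
    (intervalIntegral.integral_add_adjacent_intervals (hint _ _) (hint _ _)).symm
  have hneg : ∫ y in (-(b-a))..(0:ℝ), |y|^β = ∫ y in (0:ℝ)..(b-a), |y|^β := by
    have h2 := intervalIntegral.integral_comp_neg (a := (0:ℝ)) (b := b-a) (fun y => |y|^β)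
    simp only [abs_neg, neg_zero] at h2
    rw [← h2]
  have hval : ∫ y in (0:ℝ)..(b-a), |y|^β = (b-a)^(β+1)/(β+1) := by
    rw [intervalIntegral.integral_congr (g := fun y => y ^ β) ?_]
    · rw [integral_rpow (Or.inl (by linarith)), Real.zero_rpow (by positivity : β + 1 ≠ 0)]
      ring
    · intro y hy
      rw [Set.uIcc_of_le (by linarith : (0:ℝ) ≤ b-a)] at hy
      simp [abs_of_nonneg hy.1]
  rw [hsplitI, hneg, hval, smul_eq_mul]
  ring

lemma rpow_integrable_left {a b r : ℝ} (h : (-1:ℝ) < r) :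
    IntervalIntegrable (fun x => (x - a) ^ r) volume a b := by
  simpa using (intervalIntegrable_rpow' (a := 0) (b := b - a) h).comp_sub_right a

lemma rpow_integrable_right {a b r : ℝ} (h : (-1:ℝ) < r) :
    IntervalIntegrable (fun x => (b - x) ^ r) volume a b := by
  simpa using ((intervalIntegrable_rpow' (a := 0) (b := b - a) h).comp_sub_left b).symm

lemma ftc_identity (f : ℝ → ℝ) (a b r : ℝ) (hab : a < b) (hr0 : 0 < r) (hr1 : r < 1)
    (hf : ContDiff ℝ 2 f) :
    ∫ x in a..b, (r * (x - a) ^ (r-1) * deriv f x + r * (b - x) ^ (r-1) * deriv f x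
        + ((x - a) ^ r - (b - x) ^ r) * iteratedDeriv 2 f x)
      = (b - a) ^ r * (deriv f a + deriv f b) := by
  have h2 : ContDiff ℝ ((1:ℕ∞) + 1) f := by exact_mod_cast hf
  have hd : ContDiff ℝ 1 (deriv f) := (contDiff_succ_iff_deriv.mp h2).2.2
  have hg : Continuous (deriv f) := hd.continuous
  have hiter : iteratedDeriv 2 f = deriv (deriv f) := by
    rw [show (2:ℕ) = 1 + 1 from rfl, iteratedDeriv_succ, iteratedDeriv_one]
  have hg' : Continuous (iteratedDeriv 2 f) := hiter ▸ hd.continuous_deriv le_rfl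
  set F : ℝ → ℝ := fun x => ((x - a) ^ r - (b - x) ^ r) * deriv f x with hF
  have hcont : ContinuousOn F (Icc a b) := by
    apply Continuous.continuousOn
    exact (((continuous_id.sub continuous_const).rpow_const (fun x => Or.inr hr0.le)).sub
      ((continuous_const.sub continuous_id).rpow_const (fun x => Or.inr hr0.le))).mul hg
  have hderiv : ∀ x ∈ Ioo a b, HasDerivWithinAt F
      (r * (x - a) ^ (r-1) * deriv f x + r * (b - x) ^ (r-1) * deriv f x
        + ((x - a) ^ r - (b - x) ^ r) * iteratedDeriv 2 f x) (Ioi x) x := by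
    intro x hx
    have hxa : x - a ≠ 0 := sub_ne_zero.2 (ne_of_gt hx.1)
    have hbx : b - x ≠ 0 := sub_ne_zero.2 (ne_of_gt hx.2)
    have h1 : HasDerivAt (fun x => (x - a) ^ r) (r * (x - a) ^ (r-1) * 1) x :=
      by have := (Real.hasDerivAt_rpow_const (p := r) (Or.inl hxa)).comp x ((hasDerivAt_id x).sub_const a); exact this
    have h2' : HasDerivAt (fun x => (b - x) ^ r) (r * (b - x) ^ (r-1) * (0 - 1)) x :=
      (Real.hasDerivAt_rpow_const (Or.inl hbx)).comp x
        ((hasDerivAt_const x b).sub (hasDerivAt_id x))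
    have h3 : HasDerivAt (deriv f) (iteratedDeriv 2 f x) x := by
      rw [hiter]; exact ((hd.differentiable one_ne_zero) x).hasDerivAt
    have := ((h1.sub h2').mul h3)
    refine (HasDerivAt.hasDerivWithinAt ?_)
    convert this using 1
    · rfl
    · rfl
    · show _ = (r * (x - a) ^ (r - 1) * 1 - r * (b - x) ^ (r - 1) * (0 - 1)) * deriv f x
        + ((x - a) ^ r - (b - x) ^ r) * iteratedDeriv 2 f x
      ring
  have hint : IntervalIntegrable (fun x => r * (x - a) ^ (r-1) * deriv f x
      + r * (b - x) ^ (r-1) * deriv f x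
      + ((x - a) ^ r - (b - x) ^ r) * iteratedDeriv 2 f x) volume a b := by
    have i1 : IntervalIntegrable (fun x => r * (x - a) ^ (r-1) * deriv f x) volume a b := by
      have := ((rpow_integrable_left (a := a) (b := b) (r := r - 1) (by linarith)).const_mul
        r).mul_continuousOn hg.continuousOn
      simpa [mul_assoc] using this
    have i2 : IntervalIntegrable (fun x => r * (b - x) ^ (r-1) * deriv f x) volume a b := by
      have := ((rpow_integrable_right (a := a) (b := b) (r := r - 1) (by linarith)).const_mul
        r).mul_continuousOn hg.continuousOn
      simpa [mul_assoc] using this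
    have i3 : IntervalIntegrable (fun x => ((x - a) ^ r - (b - x) ^ r) * iteratedDeriv 2 f x)
        volume a b := by
      apply Continuous.intervalIntegrable
      exact (((continuous_id.sub continuous_const).rpow_const (fun x => Or.inr hr0.le)).sub
        ((continuous_const.sub continuous_id).rpow_const (fun x => Or.inr hr0.le))).mul hg'
    exact (i1.add i2).add i3
  have := intervalIntegral.integral_eq_sub_of_hasDeriv_right_of_le hab.le hcont hderiv hint
  rw [this, hF]
  simp only [sub_self, Real.zero_rpow hr0.ne']
  ring

set_option maxHeartbeats 1000000 in
theorem caputo_trapezoid_mconvex_holder (f : ℝ → ℝ) (a b α m p q : ℝ)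
    (ha : 0 ≤ a) (hab : a < b) (hα : α ∈ Set.Ioo (0:ℝ) 1) (hm : m ∈ Set.Ioc (0:ℝ) 1)
    (hq : 1 < q) (hp : p = q / (q - 1)) (hf : ContDiff ℝ 2 f)
    (hconv : ∀ u ∈ Set.Icc (0:ℝ) (b/m), ∀ v ∈ Set.Icc (0:ℝ) (b/m), ∀ t ∈ Set.Icc (0:ℝ) 1,
      |iteratedDeriv 2 f (t*u + m*(1-t)*v)| ^ q
        ≤ t * |iteratedDeriv 2 f u| ^ q + m * (1-t) * |iteratedDeriv 2 f v| ^ q) :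
    |(deriv f a + deriv f b) / 2
        - Real.Gamma (1 - α + 1) / (2 * (b - a) ^ (1 - α))
          * (caputoLeft α 1 f a b + (-1:ℝ)^1 * caputoRight α 1 f b a)|
      ≤ (b - a) / 2 ^ (1 + 1/q) * (1 / (p * (1 - α) + 1)) ^ (1/p)
          * (|iteratedDeriv 2 f a| ^ q + m * |iteratedDeriv 2 f (b/m)| ^ q) ^ (1/q) := by
  set r : ℝ := 1 - α with hrdef
  have hr0 : 0 < r := by rw [hrdef]; linarith [hα.2]
  have hr1 : r < 1 := by rw [hrdef]; linarith [hα.1]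
  have hΓ : 0 < Real.Gamma r := Real.Gamma_pos_of_pos hr0
  have hba : 0 < b - a := by linarith
  have hbar : 0 < (b - a) ^ r := Real.rpow_pos_of_pos hba r
  set g : ℝ → ℝ := deriv f with hgdef
  set H : ℝ → ℝ := iteratedDeriv 2 f with hHdef
  set J : ℝ := ∫ x in a..b, ((x - a) ^ r - (b - x) ^ r) * H x with hJdef
  clear_value r g H J
  -- integrability facts
  have hgd : g = deriv f := hgdef
  have hHd : H = iteratedDeriv 2 f := hHdef
  have h2 : ContDiff ℝ ((1:ℕ∞) + 1) f := by exact_mod_cast hf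
  have hd : ContDiff ℝ 1 (deriv f) := (contDiff_succ_iff_deriv.mp h2).2.2
  have hgc : Continuous g := hgd ▸ hd.continuous
  have hiter : iteratedDeriv 2 f = deriv (deriv f) := by
    rw [show (2:ℕ) = 1 + 1 from rfl, iteratedDeriv_succ, iteratedDeriv_one]
  have hHc : Continuous H := by rw [hHd, hiter]; exact hd.continuous_deriv le_rfl
  have i1 : IntervalIntegrable (fun x => (x - a) ^ (r-1) * g x) volume a b :=
    (rpow_integrable_left (by linarith)).mul_continuousOn hgc.continuousOn
  have i2 : IntervalIntegrable (fun x => (b - x) ^ (r-1) * g x) volume a b :=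
    (rpow_integrable_right (by linarith)).mul_continuousOn hgc.continuousOn
  have i3 : IntervalIntegrable (fun x => ((x - a) ^ r - (b - x) ^ r) * H x) volume a b := by
    apply Continuous.intervalIntegrable
    exact (((continuous_id.sub continuous_const).rpow_const (fun x => Or.inr hr0.le)).sub
      ((continuous_const.sub continuous_id).rpow_const (fun x => Or.inr hr0.le))).mul hHc
  -- the FTC identity, split
  have hftc := ftc_identity f a b r hab hr0 hr1 hf
  have hsplit : r * (∫ x in a..b, (x - a) ^ (r-1) * g x)
      + r * (∫ x in a..b, (b - x) ^ (r-1) * g x) + J = (b - a) ^ r * (g a + g b) := by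
    have hfun : (fun x => r * (x - a) ^ (r-1) * deriv f x + r * (b - x) ^ (r-1) * deriv f x
        + ((x - a) ^ r - (b - x) ^ r) * iteratedDeriv 2 f x)
        = fun x => (r * ((x - a) ^ (r-1) * g x) + r * ((b - x) ^ (r-1) * g x))
          + ((x - a) ^ r - (b - x) ^ r) * H x := by
      funext x; rw [hgd, hHd]; ring
    rw [hfun] at hftc
    rw [intervalIntegral.integral_add ((i1.const_mul r).add (i2.const_mul r)) i3,
      intervalIntegral.integral_add (i1.const_mul r) (i2.const_mul r),
      intervalIntegral.integral_const_mul, intervalIntegral.integral_const_mul] at hftc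
    rw [← hJdef, ← hgd] at hftc
    linear_combination hftc
  -- rewrite the caputo derivatives
  have hexp : ((1:ℕ):ℝ) - α - 1 = r - 1 := by rw [hrdef]; push_cast; ring
  have hone : ((1:ℕ):ℝ) - α = r := by rw [hrdef]; push_cast; ring
  have hcapL : caputoLeft α 1 f a b
      = (1 / Real.Gamma r) * ∫ x in a..b, (b - x) ^ (r-1) * g x := by
    simp only [caputoLeft, hexp, hone, iteratedDeriv_one, hgd]
  have hcapR : caputoRight α 1 f b a
      = (-1 / Real.Gamma r) * ∫ x in a..b, (x - a) ^ (r-1) * g x := by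
    simp only [caputoRight, hexp, hone, iteratedDeriv_one, hgd, pow_one]
  have hGamma : Real.Gamma (r + 1) = r * Real.Gamma r := Real.Gamma_add_one hr0.ne'
  -- main identity
  have hL : (g a + g b) / 2
      - Real.Gamma (r + 1) / (2 * (b - a) ^ r)
        * (caputoLeft α 1 f a b + (-1:ℝ)^1 * caputoRight α 1 f b a)
      = J / (2 * (b - a) ^ r) := by
    rw [hcapL, hcapR, hGamma]
    exact alg (g a) (g b) _ _ J ((b-a)^r) (Real.Gamma r) r hbar.ne' hΓ.ne'
      (by linear_combination hsplit)
  rw [hL]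
  -- setup for Hoelder
  have hq0 : 0 < q := lt_trans zero_lt_one hq
  have hpq : p.HolderConjugate q := by rw [hp]; exact (Real.HolderConjugate.conjExponent hq).symm
  have hp0 : 0 < p := hpq.pos
  have hm0 : 0 < m := hm.1
  have hb0 : 0 < b := lt_of_le_of_lt ha hab
  have hbm : b ≤ b / m := by rw [le_div_iff₀ hm0]; nlinarith [hm.2]
  set A : ℝ := |H a| ^ q with hA
  set B : ℝ := |H (b/m)| ^ q with hB
  have hA0 : 0 ≤ A := Real.rpow_nonneg (abs_nonneg _) q
  have hB0 : 0 ≤ B := Real.rpow_nonneg (abs_nonneg _) q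
  have hAB : 0 ≤ A + m * B := add_nonneg hA0 (mul_nonneg hm0.le hB0)
  set φ1 : ℝ → ℝ := fun x => |(x - a) ^ r - (b - x) ^ r| with hφ1
  set φ2 : ℝ → ℝ := fun x => |H x| with hφ2
  have hφ1c : Continuous φ1 := by
    rw [hφ1]
    exact (((continuous_id.sub continuous_const).rpow_const (fun x => Or.inr hr0.le)).sub
      ((continuous_const.sub continuous_id).rpow_const (fun x => Or.inr hr0.le))).abs
  have hφ2c : Continuous φ2 := hHc.abs
  haveI hfin : IsFiniteMeasure (volume.restrict (Set.Ioc a b)) :=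
    ⟨by rw [Measure.restrict_apply_univ]; exact measure_Ioc_lt_top⟩
  have hmem : ∀ (e : ℝ) (φ : ℝ → ℝ), Continuous φ →
      MemLp φ (ENNReal.ofReal e) (volume.restrict (Set.Ioc a b)) := by
    intro e φ hφ
    obtain ⟨M, hM⟩ := (isCompact_Icc (a := a) (b := b)).exists_bound_of_continuousOn
      hφ.continuousOn
    exact MemLp.of_bound hφ.aestronglyMeasurable.restrict M
      ((ae_restrict_iff' measurableSet_Ioc).2
        (Filter.Eventually.of_forall fun x hx => hM x (Set.Ioc_subset_Icc_self hx)))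
  -- step 1 : |J| ≤ ∫ φ1 * φ2
  have hJ1 : |J| ≤ ∫ x in a..b, φ1 x * φ2 x := by
    rw [hJdef]
    refine (intervalIntegral.abs_integral_le_integral_abs hab.le).trans (le_of_eq ?_)
    have : (fun x => |((x - a) ^ r - (b - x) ^ r) * H x|) = fun x => φ1 x * φ2 x := by
      funext x; rw [hφ1, hφ2]; exact abs_mul _ _
    rw [this]
  -- step 2 : Hoelder
  have hHold : ∫ x in a..b, φ1 x * φ2 x
      ≤ (∫ x in Set.Ioc a b, φ1 x ^ p) ^ (1/p) * (∫ x in Set.Ioc a b, φ2 x ^ q) ^ (1/q) := by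
    rw [intervalIntegral.integral_of_le hab.le]
    exact MeasureTheory.integral_mul_le_Lp_mul_Lq_of_nonneg hpq
      (Filter.Eventually.of_forall fun x => abs_nonneg _)
      (Filter.Eventually.of_forall fun x => abs_nonneg _)
      (hmem p φ1 hφ1c) (hmem q φ2 hφ2c)
  -- step 3 : bound the φ1 factor
  set β : ℝ := p * r with hβdef
  have hβ0 : 0 < β := mul_pos hp0 hr0
  have hC : ∫ x in Set.Ioc a b, φ1 x ^ p ≤ (b - a) ^ (β + 1) / (β + 1) := by
    have hpt : ∀ x ∈ Set.Ioc a b, φ1 x ^ p ≤ |2*x - (a+b)| ^ β := by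
      intro x hx
      have h1 : φ1 x ≤ |2*x - (a+b)| ^ r := by
        rw [hφ1]
        have := abs_rpow_sub_le (u := x - a) (v := b - x)
          (by linarith [hx.1]) (by linarith [hx.2]) hr0.le hr1.le
        calc |(x - a) ^ r - (b - x) ^ r| ≤ |x - a - (b - x)| ^ r := this
        _ = |2*x - (a+b)| ^ r := by rw [show x - a - (b - x) = 2*x - (a+b) from by ring]
      calc φ1 x ^ p ≤ (|2*x - (a+b)| ^ r) ^ p :=
            Real.rpow_le_rpow (abs_nonneg _) h1 hp0.le
      _ = |2*x - (a+b)| ^ β := by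
            rw [← Real.rpow_mul (abs_nonneg _), mul_comm r p, hβdef]
    have hi1 : IntegrableOn (fun x => φ1 x ^ p) (Set.Ioc a b) volume :=
      (hφ1c.rpow_const fun x => Or.inr hp0.le).integrableOn_Ioc
    have hi2 : IntegrableOn (fun x => |2*x - (a+b)| ^ β) (Set.Ioc a b) volume :=
      (((continuous_const.mul continuous_id).sub continuous_const).abs.rpow_const
        fun x => Or.inr hβ0.le).integrableOn_Ioc
    refine (MeasureTheory.setIntegral_mono_on hi1 hi2 measurableSet_Ioc hpt).trans (le_of_eq ?_)
    rw [← intervalIntegral.integral_of_le hab.le]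
    exact integral_abs_two_mul_sub hab hβ0
  -- step 4 : bound the φ2 factor via m-convexity
  have hD : ∫ x in Set.Ioc a b, φ2 x ^ q ≤ (b - a) * (A + m * B) / 2 := by
    have hptD : ∀ x ∈ Set.Ioc a b, φ2 x ^ q
        ≤ (b-x)/(b-a) * A + m * ((x-a)/(b-a)) * B := by
      intro x hx
      set t : ℝ := (b-x)/(b-a) with ht
      have ht0 : 0 ≤ t := div_nonneg (by linarith [hx.2]) hba.le
      have ht1 : t ≤ 1 := by rw [ht, div_le_one hba]; linarith [hx.1]
      have harg : t*a + m*(1-t)*(b/m) = x := by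
        rw [ht]; field_simp; ring
      have hcv := hconv a ⟨ha, le_trans hab.le hbm⟩ (b/m) ⟨by positivity, le_refl _⟩
        t ⟨ht0, ht1⟩
      rw [harg] at hcv
      calc φ2 x ^ q = |H x| ^ q := by rw [hφ2]
      _ ≤ t * A + m * (1-t) * B := hcv
      _ = (b-x)/(b-a) * A + m * ((x-a)/(b-a)) * B := by rw [ht]; field_simp; try ring
    have hi1 : IntegrableOn (fun x => φ2 x ^ q) (Set.Ioc a b) volume :=
      (hφ2c.rpow_const fun x => Or.inr hq0.le).integrableOn_Ioc
    have hi2 : IntegrableOn (fun x => (b-x)/(b-a) * A + m * ((x-a)/(b-a)) * B)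
        (Set.Ioc a b) volume := by
      apply Continuous.integrableOn_Ioc
      fun_prop
    refine (MeasureTheory.setIntegral_mono_on hi1 hi2 measurableSet_Ioc hptD).trans
      (le_of_eq ?_)
    rw [← intervalIntegral.integral_of_le hab.le]
    have e5 : (fun x => (b-x)/(b-a) * A + m * ((x-a)/(b-a)) * B)
        = fun x => (b*A - m*a*B)/(b-a) + x * ((m*B - A)/(b-a)) := by
      funext x; field_simp; ring
    rw [e5, intervalIntegral.integral_add intervalIntegrable_const
      (intervalIntegrable_id.mul_const _),
      intervalIntegral.integral_const, intervalIntegral.integral_mul_const, integral_id,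
      smul_eq_mul]
    field_simp
    ring
  -- step 5 : assemble
  have hF1 : (0:ℝ) ≤ ∫ x in Set.Ioc a b, φ1 x ^ p :=
    setIntegral_nonneg measurableSet_Ioc fun x _ => Real.rpow_nonneg (abs_nonneg _) p
  have hF2 : (0:ℝ) ≤ ∫ x in Set.Ioc a b, φ2 x ^ q :=
    setIntegral_nonneg measurableSet_Ioc fun x _ => Real.rpow_nonneg (abs_nonneg _) q
  have s2 : (∫ x in Set.Ioc a b, φ1 x ^ p) ^ (1/p) ≤ ((b - a) ^ (β + 1) / (β + 1)) ^ (1/p) :=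
    Real.rpow_le_rpow hF1 hC (by positivity)
  have s3 : (∫ x in Set.Ioc a b, φ2 x ^ q) ^ (1/q) ≤ ((b - a) * (A + m * B) / 2) ^ (1/q) :=
    Real.rpow_le_rpow hF2 hD (by positivity)
  have sJ : |J| ≤ ((b - a) ^ (β + 1) / (β + 1)) ^ (1/p) * ((b - a) * (A + m * B) / 2) ^ (1/q) :=
    (hJ1.trans hHold).trans (mul_le_mul s2 s3 (Real.rpow_nonneg hF2 _) (by positivity))
  have hden : (0:ℝ) < 2 * (b - a) ^ r := by positivity
  calc |J / (2 * (b - a) ^ r)| = |J| / (2 * (b - a) ^ r) := by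
        rw [abs_div, abs_of_pos hden]
  _ ≤ (((b - a) ^ (β + 1) / (β + 1)) ^ (1/p) * ((b - a) * (A + m * B) / 2) ^ (1/q))
        / (2 * (b - a) ^ r) := (div_le_div_iff_of_pos_right hden).2 sJ
  _ = (b - a) / 2 ^ (1 + 1/q) * (1 / (p * r + 1)) ^ (1/p) * (A + m * B) ^ (1/q) := by
        rw [Real.div_rpow (by positivity) (by positivity),
          Real.div_rpow (by positivity) (by norm_num : (0:ℝ) ≤ 2),
          Real.mul_rpow hba.le hAB,
          ← Real.rpow_mul hba.le,
          show (β + 1) * (1/p) = r + 1/p from by rw [hβdef]; field_simp,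
          Real.rpow_add two_pos 1 (1/q), Real.rpow_one,
          one_div (p * r + 1), Real.inv_rpow (by positivity)]
        have e6 : (b - a) ^ (r + 1/p) * (b - a) ^ (1/q) = (b - a) ^ r * (b - a) := by
          rw [← Real.rpow_add hba, show r + 1/p + 1/q = r + 1 from by
            have := hpq.inv_add_inv_eq_one; rw [← one_div, ← one_div] at this; linarith,
            Real.rpow_add hba, Real.rpow_one]
        set u := (b - a) ^ (r + 1/p) with hu
        set v := (b - a) ^ (1/q) with hv
        set w := (b - a) ^ r with hw
        set z := (A + m * B) ^ (1/q) with hz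
        set y := (β + 1) ^ (1/p) with hy
        set s := (2:ℝ) ^ (1/q) with hs
        have hy0 : 0 < y := by rw [hy]; positivity
        have hs0 : 0 < s := by rw [hs]; positivity
        have hw0 : 0 < w := by rw [hw]; positivity
        field_simp
        linear_combination z * e6
end
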